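/- Let L ∈ ℝ be such that μ(w) ≥ L for every nonzero w ∈ V. Let v, p ∈ V be nonzero with μ(v) > L, and let α ∈ [0, π/2] be such that ∠(v,p) ≤ α. Then (μ(p) − L)/(μ(v) − L) ≥ ( max{ cos α − (ϱ(v)/(μ(v) − L))·sin α, 0 } )². -/

import Mathlib

open InnerProductGeometry Real RealInnerProductSpace

lemma inner_self_pos' {V : Type*} [NormedAddCommGroup V] [InnerProductSpace ℝ V]
    {w : V} (hw : w ≠ 0) : (0:ℝ) < ⟪w, w⟫ := by
  rw [real_inner_self_eq_norm_sq]
  have : (0:ℝ) < ‖w‖ := norm_pos_iff.mpr hw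
  positivity

lemma final_aux {m nv np c Svp Svv Spp : ℝ} (hm : 0 < m)
    (hnv : 0 < nv) (hSvveq : Svv = m * nv^2)
    (hCS : Svp^2 ≤ Spp * Svv) (hsq : (nv * np * (m * c))^2 ≤ Svp^2) :
    c^2 * (np^2 * m) ≤ Spp := by
  subst hSvveq
  nlinarith [hCS, hsq, mul_pos hm (mul_pos hnv hnv), sq_nonneg (np * c)]

lemma cs_aux {a b c : ℝ} (ha : 0 < a) (h : ∀ t : ℝ, 0 ≤ c + 2*t*b + t^2*a) :
    b^2 ≤ c*a := by
  have h1 := h (-(b/a))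
  have e : c + 2*(-(b/a))*b + (-(b/a))^2*a = c - b^2/a := by
    field_simp; ring
  rw [e, sub_nonneg, div_le_iff₀ ha] at h1
  linarith


/-- The Rayleigh quotient `μ(v) = ⟨Bv,v⟩/⟨v,v⟩` of a linear operator `B`. -/
noncomputable def rayQuot {V : Type*} [NormedAddCommGroup V] [InnerProductSpace ℝ V]
    (B : V →ₗ[ℝ] V) (v : V) : ℝ :=
  ⟪B v, v⟫ / ⟪v, v⟫

/-- The normalized residual `ϱ(v) = ‖Bv − μ(v)v‖/‖v‖`. -/
noncomputable def resQuot {V : Type*} [NormedAddCommGroup V] [InnerProductSpace ℝ V]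
    (B : V →ₗ[ℝ] V) (v : V) : ℝ :=
  ‖B v - rayQuot B v • v‖ / ‖v‖

/-- Theorem `thm:pertbound`: lower bound on the Rayleigh quotient of a perturbed vector
in terms of the angle of the perturbation and the normalized residual. -/
theorem rayleigh_perturbation_bound
    {V : Type*} [NormedAddCommGroup V] [InnerProductSpace ℝ V] [FiniteDimensional ℝ V]
    (B : V →ₗ[ℝ] V) (hB : LinearMap.IsSymmetric B)
    (L : ℝ) (hL : ∀ w : V, w ≠ 0 → L ≤ rayQuot B w)
    (v p : V) (hv : v ≠ 0) (hp : p ≠ 0)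
    (hμv : L < rayQuot B v)
    (α : ℝ) (hα : α ∈ Set.Icc (0:ℝ) (Real.pi / 2))
    (hangle : InnerProductGeometry.angle v p ≤ α) :
    (max (Real.cos α - resQuot B v / (rayQuot B v - L) * Real.sin α) 0) ^ 2 ≤
      (rayQuot B p - L) / (rayQuot B v - L) := by
  have hvv : (0:ℝ) < ⟪v, v⟫ := inner_self_pos' hv
  have hpp : (0:ℝ) < ⟪p, p⟫ := inner_self_pos' hp
  have hnv : (0:ℝ) < ‖v‖ := norm_pos_iff.mpr hv
  have hnp : (0:ℝ) < ‖p‖ := norm_pos_iff.mpr hp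
  set μ := rayQuot B v with hμdef
  set ϱ := resQuot B v with hϱdef
  have hm : (0:ℝ) < μ - L := sub_pos.mpr hμv
  -- nonnegativity of the form
  have hQ : ∀ w : V, L * ⟪w, w⟫ ≤ ⟪B w, w⟫ := by
    intro w
    by_cases hw : w = 0
    · simp [hw]
    · have h1 := hL w hw
      have h2 : (0:ℝ) < ⟪w, w⟫ := inner_self_pos' hw
      rw [rayQuot, le_div_iff₀ h2] at h1
      linarith
  have hμp : L ≤ rayQuot B p := hL p hp
  -- residual
  set r := B v - μ • v with hrdef
  have hrv : ⟪r, v⟫ = 0 := by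
    rw [hrdef, inner_sub_left, real_inner_smul_left, hμdef, rayQuot]
    field_simp
    ring
  have hrnorm : ‖r‖ = ϱ * ‖v‖ := by
    rw [hϱdef, resQuot]
    field_simp [hrdef, hμdef]
    rfl
  have hϱ0 : 0 ≤ ϱ := div_nonneg (norm_nonneg _) (norm_nonneg _)
  -- Cauchy-Schwarz for the form S x y = ⟪B x, y⟫ - L ⟪x, y⟫
  have hBvp : ⟪B p, v⟫ = ⟪B v, p⟫ := by
    rw [hB p v, real_inner_comm]
  set Svv : ℝ := ⟪B v, v⟫ - L * ⟪v, v⟫ with hSvv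
  set Svp : ℝ := ⟪B v, p⟫ - L * ⟪v, p⟫ with hSvp
  set Spp : ℝ := ⟪B p, p⟫ - L * ⟪p, p⟫ with hSpp
  have hSvvpos : 0 < Svv := by
    have : μ = ⟪B v, v⟫ / ⟪v, v⟫ := rfl
    rw [this, lt_div_iff₀ hvv] at hμv
    rw [hSvv]; linarith
  have hSvveq : Svv = (μ - L) * ⟪v, v⟫ := by
    rw [hSvv, hμdef, rayQuot]; field_simp
  have hCS : Svp ^ 2 ≤ Spp * Svv := by
    apply cs_aux hSvvpos
    intro t
    have := hQ (p + t • v)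
    have e1 : ⟪B (p + t • v), p + t • v⟫
        = ⟪B p, p⟫ + 2 * t * ⟪B v, p⟫ + t^2 * ⟪B v, v⟫ := by
      rw [map_add, map_smul]
      simp only [inner_add_left, inner_add_right, real_inner_smul_left,
        real_inner_smul_right, smul_eq_mul]
      rw [hBvp]; ring
    have e2 : ⟪p + t • v, p + t • v⟫
        = ⟪p, p⟫ + 2 * t * ⟪v, p⟫ + t^2 * ⟪v, v⟫ := by
      simp only [inner_add_left, inner_add_right, real_inner_smul_left,
        real_inner_smul_right]
      rw [real_inner_comm p v]; ring
    rw [e1, e2] at this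
    rw [hSpp, hSvp, hSvv]
    nlinarith [this]
  -- angle quantities
  set θ := InnerProductGeometry.angle v p with hθdef
  have hθ0 : 0 ≤ θ := angle_nonneg v p
  have hθpi : θ ≤ π := angle_le_pi v p
  have hcosθ : Real.cos θ * (‖v‖ * ‖p‖) = ⟪v, p⟫ := cos_angle_mul_norm_mul_norm v p
  have hsθ0 : 0 ≤ Real.sin θ := Real.sin_nonneg_of_nonneg_of_le_pi hθ0 hθpi
  have hsα0 : 0 ≤ Real.sin α := Real.sin_nonneg_of_nonneg_of_le_pi hα.1
    (le_trans hα.2 (by linarith [Real.pi_pos]))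
  have hcos_mono : Real.cos α ≤ Real.cos θ :=
    Real.cos_le_cos_of_nonneg_of_le_pi hθ0 (le_trans hα.2 (by linarith [Real.pi_pos])) hangle
  have hsin_mono : Real.sin θ ≤ Real.sin α :=
    Real.sin_le_sin_of_le_of_le_pi_div_two (by linarith [Real.pi_pos]) hα.2 hangle
  -- bound on ⟪r, p⟫
  set t₀ : ℝ := ⟪v, p⟫ / ⟪v, v⟫ with ht₀
  have hproj : ‖p - t₀ • v‖ * ‖v‖ = Real.sin θ * (‖v‖ * ‖p‖) := by
    have hD : 0 ≤ ⟪v, v⟫ * ⟪p, p⟫ - ⟪v, p⟫ * ⟪v, p⟫ := by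
      have := real_inner_mul_inner_self_le v p
      linarith
    have hsq : (‖p - t₀ • v‖ * ‖v‖)^2 = ⟪v, v⟫ * ⟪p, p⟫ - ⟪v, p⟫ * ⟪v, p⟫ := by
      have e : ⟪p - t₀ • v, p - t₀ • v⟫ = ⟪p, p⟫ - ⟪v, p⟫^2 / ⟪v, v⟫ := by
        simp only [inner_sub_left, inner_sub_right, real_inner_smul_left,
          real_inner_smul_right, ht₀]
        rw [real_inner_comm p v]
        field_simp; ring
      have h2 : ⟪v, v⟫ = ‖v‖^2 := real_inner_self_eq_norm_sq v
      have h4 : ⟪p - t₀ • v, p - t₀ • v⟫ = ‖p - t₀ • v‖^2 :=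
        real_inner_self_eq_norm_sq _
      rw [mul_pow, ← h4, e, ← h2]
      field_simp
    rw [sin_angle_mul_norm_mul_norm, ← hsq, Real.sqrt_sq (by positivity)]
  have hrp : -(ϱ * ‖v‖ * (Real.sin θ * ‖p‖)) ≤ ⟪r, p⟫ := by
    have e : ⟪r, p⟫ = ⟪r, p - t₀ • v⟫ := by
      rw [inner_sub_right, real_inner_smul_right, hrv]; ring
    have hb := abs_real_inner_le_norm r (p - t₀ • v)
    have hb2 : -(‖r‖ * ‖p - t₀ • v‖) ≤ ⟪r, p - t₀ • v⟫ := by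
      have := neg_abs_le (⟪r, p - t₀ • v⟫:ℝ); linarith
    have e2 : ‖r‖ * ‖p - t₀ • v‖ = ϱ * ‖v‖ * (Real.sin θ * ‖p‖) := by
      rw [hrnorm]
      have : ‖p - t₀ • v‖ = Real.sin θ * ‖p‖ := by
        have e3 : ‖p - t₀ • v‖ * ‖v‖ = (Real.sin θ * ‖p‖) * ‖v‖ := by
          rw [hproj]; ring
        exact mul_right_cancel₀ hnv.ne' e3
      rw [this]
    rw [e]; rw [e2] at hb2; exact hb2
  -- S v p expansion
  have hSvpe : Svp = ⟪r, p⟫ + (μ - L) * ⟪v, p⟫ := by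
    rw [hSvp, hrdef, inner_sub_left, real_inner_smul_left]; ring
  -- case split on the max
  rcases le_or_gt (Real.cos α - ϱ / (μ - L) * Real.sin α) 0 with hc | hc
  · rw [max_eq_right hc]
    have h0 : ((0:ℝ)) ^ 2 = 0 := by norm_num
    rw [h0]
    exact div_nonneg (by linarith) hm.le
  · rw [max_eq_left hc.le]
    set c : ℝ := Real.cos α - ϱ / (μ - L) * Real.sin α with hcdef
    have hκ : 0 ≤ ϱ / (μ - L) := div_nonneg hϱ0 hm.le
    have hcθ : c ≤ Real.cos θ - ϱ / (μ - L) * Real.sin θ := by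
      have := mul_le_mul_of_nonneg_left hsin_mono hκ
      rw [hcdef]; linarith
    have hkey : ϱ / (μ - L) * (μ - L) = ϱ := div_mul_cancel₀ _ hm.ne'
    have hcθ' : (μ - L) * c ≤ (μ - L) * Real.cos θ - ϱ * Real.sin θ := by
      have h1 := mul_le_mul_of_nonneg_left hcθ hm.le
      have h2 : (μ - L) * (Real.cos θ - ϱ / (μ - L) * Real.sin θ)
          = (μ - L) * Real.cos θ - (ϱ / (μ - L) * (μ - L)) * Real.sin θ := by ring
      rw [h2, hkey] at h1
      exact h1
    have hSvplb : ‖v‖ * ‖p‖ * ((μ - L) * c) ≤ Svp := by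
      rw [hSvpe, ← hcosθ]
      have h2 := mul_le_mul_of_nonneg_left hcθ'
        (by positivity : (0:ℝ) ≤ ‖v‖ * ‖p‖)
      linarith [hrp, h2]
    have hSvpnn : 0 ≤ ‖v‖ * ‖p‖ * ((μ - L) * c) := by positivity
    have hsq : (‖v‖ * ‖p‖ * ((μ - L) * c))^2 ≤ Svp^2 :=
      pow_le_pow_left₀ hSvpnn hSvplb 2
    -- conclude
    have hray : rayQuot B p - L = Spp / ⟪p, p⟫ := by
      rw [rayQuot, hSpp]; field_simp
    rw [hray, div_div, le_div_iff₀ (mul_pos hpp hm)]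
    have h2 : ⟪v, v⟫ = ‖v‖^2 := real_inner_self_eq_norm_sq v
    have h3 : ⟪p, p⟫ = ‖p‖^2 := real_inner_self_eq_norm_sq p
    have hSvveq' : Svv = (μ - L) * ‖v‖^2 := by rw [hSvveq, h2]
    rw [h3]
    exact final_aux hm hnv hSvveq' hCS hsq
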